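/- The set of complex roots of all polynomials f(n) = binom(n+2,2) + b*binom(n+1,2) + binom(n,2) as b ranges over nonnegative reals, together with the roots of binom(n+1,2), is exactly [-1,0] ∪ { α ∈ ℂ : Re(α) = -1/2, 0 < |Im(α)| ≤ √3/2 }. -/

import Mathlib

/-- Polynomial binomial coefficient `binom(x, k) = x(x-1)⋯(x-k+1)/k!` in a complex variable. -/
noncomputable def cbinom (x : ℂ) (k : ℕ) : ℂ :=
  (∏ j ∈ Finset.range k, (x - (j : ℂ))) / (k.factorial : ℂ)

lemma key (α b : ℂ) : cbinom (α+2) 2 + b * cbinom (α+1) 2 + cbinom α 2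
    = ((b+2)*(α^2+α)+2)/2 := by
  simp only [cbinom, Finset.prod_range_succ, Finset.prod_range_zero]
  norm_num [Nat.factorial]
  ring

lemma key2 (α : ℂ) : cbinom (α+1) 2 = (α^2+α)/2 := by
  simp only [cbinom, Finset.prod_range_succ, Finset.prod_range_zero]
  norm_num [Nat.factorial]
  ring

lemma mid (α : ℂ) (r : ℝ) (hr : α^2+α = (r:ℂ)) (h1 : -1 ≤ r) (h2 : r ≤ 0) :
    (α.im = 0 ∧ -1 ≤ α.re ∧ α.re ≤ 0) ∨
      (α.re = -(1/2) ∧ 0 < |α.im| ∧ |α.im| ≤ Real.sqrt 3 / 2) := by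
  obtain ⟨hre, him⟩ := Complex.ext_iff.mp hr
  simp only [pow_two, Complex.add_re, Complex.add_im, Complex.mul_re, Complex.mul_im,
    Complex.ofReal_re, Complex.ofReal_im] at hre him
  set x := α.re with hxdef
  set y := α.im with hydef
  rcases eq_or_ne y 0 with hy | hy
  · left
    refine ⟨hy, ?_, ?_⟩ <;> nlinarith [hre, sq_nonneg x, sq_nonneg y, hy]
  · have hx : x = -(1/2) := by
      have h0 : y * (2*x + 1) = 0 := by linarith [him]
      rcases mul_eq_zero.mp h0 with h | h
      · exact absurd h hy
      · linarith
    right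
    refine ⟨hx, abs_pos.mpr hy, ?_⟩
    have hy2 : y^2 ≤ 3/4 := by nlinarith [hre]
    nlinarith [Real.sq_sqrt (show (0:ℝ) ≤ 3 by norm_num), Real.sqrt_nonneg 3,
      abs_nonneg y, sq_abs y]

lemma back (α : ℂ) (r : ℝ) (hr : α^2+α = (r:ℂ)) (h1 : -1 ≤ r) (h2 : r ≤ 0) :
    (∃ b : ℝ, 0 ≤ b ∧
        cbinom (α + 2) 2 + (b : ℂ) * cbinom (α + 1) 2 + cbinom α 2 = 0) ∨
      cbinom (α + 1) 2 = 0 := by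
  rcases eq_or_lt_of_le h2 with h0 | h0
  · right
    rw [key2, hr, h0]
    simp
  · left
    have hrne : r ≠ 0 := h0.ne
    refine ⟨-2/r - 2, ?_, ?_⟩
    · have : 2 ≤ -2/r := by
        rw [le_div_iff_of_neg h0]
        linarith
      linarith
    · rw [key]
      have hrne' : (r:ℂ) ≠ 0 := by exact_mod_cast hrne
      push_cast
      rw [hr]
      field_simp
      ring

theorem stmt5 :
    {α : ℂ | (∃ b : ℝ, 0 ≤ b ∧
          cbinom (α + 2) 2 + (b : ℂ) * cbinom (α + 1) 2 + cbinom α 2 = 0) ∨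
        cbinom (α + 1) 2 = 0} =
      {α : ℂ | α.im = 0 ∧ -1 ≤ α.re ∧ α.re ≤ 0} ∪
        {α : ℂ | α.re = -(1 / 2) ∧ 0 < |α.im| ∧ |α.im| ≤ Real.sqrt 3 / 2} := by
  ext α
  simp only [Set.mem_setOf_eq, Set.mem_union]
  constructor
  · rintro (⟨b, hb, heq⟩ | heq)
    · rw [key] at heq
      have h0 : (0:ℝ) < b + 2 := by linarith
      have hb2 : ((b:ℂ)+2) ≠ 0 := by
        have h1 : (b+2:ℝ) ≠ 0 := h0.ne'
        have := Complex.ofReal_ne_zero.mpr h1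
        push_cast at this
        exact this
      have hr : α^2 + α = ((-2/(b+2) : ℝ) : ℂ) := by
        push_cast
        field_simp at heq ⊢
        linear_combination heq
      have h1 : -1 ≤ -2/(b+2) := by
        rw [le_div_iff₀ h0]
        linarith
      have h2 : -2/(b+2) ≤ 0 := by
        rw [div_le_iff₀ h0]
        linarith
      exact mid α _ hr h1 h2
    · rw [key2] at heq
      have hr : α^2 + α = ((0:ℝ) : ℂ) := by
        push_cast
        field_simp at heq
        linear_combination heq
      exact mid α 0 hr (by norm_num) le_rfl
  · rintro (⟨hy, hx1, hx2⟩ | ⟨hx, hy, hy2⟩)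
    · refine back α (α.re^2 + α.re) ?_ ?_ ?_
      · apply Complex.ext <;>
          simp [pow_two, Complex.mul_re, Complex.mul_im, hy]
      · nlinarith
      · nlinarith
    · refine back α (-(1/4) - α.im^2) ?_ ?_ ?_
      · apply Complex.ext <;>
          simp [pow_two, Complex.mul_re, Complex.mul_im, hx] <;> ring
      · have : α.im^2 ≤ 3/4 := by
          nlinarith [Real.sq_sqrt (show (0:ℝ) ≤ 3 by norm_num), Real.sqrt_nonneg 3,
            sq_abs α.im, abs_nonneg α.im]
        linarith
      · nlinarith [sq_nonneg α.im]
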